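/- Let C be an n×n matrix over ℝ∪{−∞} that is row-regular (every row contains at least one real entry), and let Δ = max_{1≤i,j≤n} C_{ij}. A vector x ∈ ℝⁿ satisfies F(x) = Δ, where F(x) = (max_{1≤i,j≤n}(C_{ij} + x_j)) + (max_{1≤k≤n}(−x_k)), if and only if there exists u ∈ ℝⁿ such that for every i: x_i = max( u_i , −Δ + max_{1≤j≤n}( (max_{1≤k≤n} C_{kj}) + u_j ) ). -/

import Mathlib

/-!
Max-plus semifield modeled as `WithBot ℝ` (= ℝ ∪ {−∞}); `⊔` is max-plus addition.
A matrix is row-regular when every row has a real (≠ −∞) entry.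
-/

/-- The makespan objective F(x) = (max_{i,j}(C_{ij} + x_j)) + (max_k (−x_k)). -/
noncomputable def makespan {n : ℕ} (C : Fin n → Fin n → WithBot ℝ)
    (x : Fin n → ℝ) : WithBot ℝ :=
  (Finset.univ.sup fun i => Finset.univ.sup fun j => C i j + ((x j : ℝ) : WithBot ℝ)) +
    (Finset.univ.sup fun k => ((-(x k) : ℝ) : WithBot ℝ))

private lemma wb_cancel (a : ℝ) (b : WithBot ℝ) :
    ((-a : ℝ) : WithBot ℝ) + (((a : ℝ) : WithBot ℝ) + b) = b := by
  rw [← add_assoc, ← WithBot.coe_add, neg_add_cancel, WithBot.coe_zero, zero_add]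

private lemma wb_shift (a : ℝ) (b c : WithBot ℝ) :
    ((a : ℝ) : WithBot ℝ) + b ≤ c ↔ b ≤ ((-a : ℝ) : WithBot ℝ) + c := by
  constructor
  · intro h
    calc b = ((-a : ℝ) : WithBot ℝ) + ((a : ℝ) + b) := (wb_cancel a b).symm
    _ ≤ ((-a : ℝ) : WithBot ℝ) + c := add_le_add_right h _
  · intro h
    calc ((a : ℝ) : WithBot ℝ) + b ≤ (a : ℝ) + (((-a : ℝ) : WithBot ℝ) + c) :=
          add_le_add_right h _
    _ = c := by rw [← add_assoc, ← WithBot.coe_add, add_neg_cancel, WithBot.coe_zero, zero_add]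

private lemma wb_add_sup (a b c : WithBot ℝ) : a + (b ⊔ c) = (a + b) ⊔ (a + c) := by
  rcases le_total b c with h | h
  · simp [sup_eq_right.mpr h, sup_eq_right.mpr (add_le_add_right h a)]
  · simp [sup_eq_left.mpr h, sup_eq_left.mpr (add_le_add_right h a)]

private lemma wb_sup_add {n : ℕ} (hn : 0 < n) (f : Fin n → WithBot ℝ) (t : WithBot ℝ) :
    (Finset.univ.sup f) + t = Finset.univ.sup fun j => f j + t := by
  obtain ⟨j0, -, hj0⟩ := Finset.exists_mem_eq_sup (Finset.univ : Finset (Fin n))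
    ⟨⟨0, hn⟩, Finset.mem_univ _⟩ f
  refine le_antisymm ?_ (Finset.sup_le fun j _ =>
    add_le_add_left (Finset.le_sup (Finset.mem_univ j)) t)
  rw [hj0]
  exact Finset.le_sup (f := fun j => f j + t) (Finset.mem_univ j0)

/-- All solutions of the minimum-makespan problem under start-finish constraints:
F(x) = Δ iff x = (I ⊕ Δ⁻¹11ᵀC)u for some u ∈ ℝⁿ, i.e.
x_i = max(u_i, −Δ + max_j((max_k C_{kj}) + u_j)). -/
theorem stmt_9 {n : ℕ} (hn : 0 < n) (C : Fin n → Fin n → WithBot ℝ)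
    (hC : ∀ i, ∃ j, C i j ≠ ⊥) (Δ : ℝ)
    (hΔ : (Δ : WithBot ℝ) = Finset.univ.sup fun i => Finset.univ.sup fun j => C i j)
    (x : Fin n → ℝ) :
    makespan C x = (Δ : WithBot ℝ) ↔
      ∃ u : Fin n → ℝ, ∀ i,
        ((x i : ℝ) : WithBot ℝ) =
          ((u i : ℝ) : WithBot ℝ) ⊔
            (((-Δ : ℝ) : WithBot ℝ) +
              Finset.univ.sup fun j =>
                (Finset.univ.sup fun k => C k j) + ((u j : ℝ) : WithBot ℝ)) := by
  classical
  set c : Fin n → WithBot ℝ := fun j => Finset.univ.sup fun k => C k j with hc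
  have hne : (Finset.univ : Finset (Fin n)).Nonempty := ⟨⟨0, hn⟩, Finset.mem_univ _⟩
  -- Δ is the sup of column maxima
  have hΔ' : (Δ : WithBot ℝ) = Finset.univ.sup c := by
    rw [hΔ, Finset.sup_comm]
  obtain ⟨j0, -, hj0⟩ := Finset.exists_mem_eq_sup (Finset.univ : Finset (Fin n)) hne c
  rw [← hΔ'] at hj0
  -- value of S(v) := sup_j (c j + v j)
  set Sf : (Fin n → ℝ) → WithBot ℝ :=
    fun v => Finset.univ.sup fun j => c j + ((v j : ℝ) : WithBot ℝ) with hSf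
  -- first factor of makespan
  have hfac1 : (Finset.univ.sup fun i => Finset.univ.sup fun j =>
      C i j + ((x j : ℝ) : WithBot ℝ)) = Sf x := by
    rw [Finset.sup_comm]
    refine Finset.sup_congr rfl fun j _ => ?_
    exact (wb_sup_add hn (fun k => C k j) _).symm
  -- second factor
  set M : ℝ := Finset.univ.sup' hne fun k => -(x k) with hM
  have hfac2 : (Finset.univ.sup fun k => ((-(x k) : ℝ) : WithBot ℝ)) = ((M : ℝ) : WithBot ℝ) := by
    rw [hM, Finset.coe_sup']
    rfl
  have hMk : ∀ k, -(x k) ≤ M := fun k => by rw [hM]; exact Finset.le_sup' (fun k => -(x k)) (Finset.mem_univ k)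
  obtain ⟨k0, -, hk0⟩ := Finset.exists_mem_eq_sup' hne fun k => -(x k)
  -- key: Δ + (-M) ≤ Sf x always
  have hΔle : (Δ : WithBot ℝ) + ((-M : ℝ) : WithBot ℝ) ≤ Sf x := by
    calc (Δ : WithBot ℝ) + ((-M : ℝ) : WithBot ℝ) = c j0 + ((-M : ℝ) : WithBot ℝ) := by
          rw [hj0]
    _ ≤ c j0 + ((x j0 : ℝ) : WithBot ℝ) := by
          exact add_le_add_right (WithBot.coe_le_coe.mpr (by linarith [hMk j0])) _
    _ ≤ Sf x := Finset.le_sup (f := fun j => c j + ((x j : ℝ) : WithBot ℝ)) (Finset.mem_univ j0)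
  -- key equivalence
  have keyB : makespan C x = (Δ : WithBot ℝ) ↔
      ∀ i, ((-Δ : ℝ) : WithBot ℝ) + Sf x ≤ ((x i : ℝ) : WithBot ℝ) := by
    unfold makespan
    rw [hfac1, hfac2]
    constructor
    · intro h i
      have hS : Sf x = (Δ : WithBot ℝ) + ((-M : ℝ) : WithBot ℝ) := by
        have h0 := wb_cancel M (Sf x)
        rw [add_comm ((M : ℝ) : WithBot ℝ) (Sf x), h] at h0
        exact h0.symm.trans (add_comm _ _)
      rw [hS, wb_cancel]
      exact WithBot.coe_le_coe.mpr (by linarith [hMk i])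
    · intro h
      have h2 : Sf x ≤ (Δ : WithBot ℝ) + ((x k0 : ℝ) : WithBot ℝ) := by
        have := (wb_shift (-Δ) (Sf x) ((x k0 : ℝ) : WithBot ℝ)).mp (h k0)
        simpa using this
      have hx : (x k0 : ℝ) = -M := by rw [hM, hk0]; ring
      rw [hx] at h2
      have hS : Sf x = (Δ : WithBot ℝ) + ((-M : ℝ) : WithBot ℝ) := le_antisymm h2 hΔle
      rw [hS, add_assoc, ← WithBot.coe_add, neg_add_cancel, WithBot.coe_zero, add_zero]
  rw [keyB]
  constructor
  · intro h
    exact ⟨x, fun i => (sup_eq_left.mpr (h i)).symm⟩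
  · rintro ⟨u, hu⟩
    -- T := -Δ + Sf u
    set T : WithBot ℝ := ((-Δ : ℝ) : WithBot ℝ) + Sf u with hT
    have huT : ∀ i, ((x i : ℝ) : WithBot ℝ) = ((u i : ℝ) : WithBot ℝ) ⊔ T := hu
    -- Sf u ≠ ⊥
    have hSbot : Sf u ≠ ⊥ := by
      intro hb
      have : c j0 + ((u j0 : ℝ) : WithBot ℝ) ≤ (⊥ : WithBot ℝ) := by
        rw [← hb]
        exact Finset.le_sup (f := fun j => c j + ((u j : ℝ) : WithBot ℝ)) (Finset.mem_univ j0)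
      rw [← hj0] at this
      simp [← WithBot.coe_add] at this
    have hTbot : T ≠ ⊥ := by
      rw [hT]
      simp [WithBot.add_eq_bot, hSbot]
    obtain ⟨t, ht⟩ := WithBot.ne_bot_iff_exists.mp hTbot
    -- Sf x = Sf u
    have hSx : Sf x = Sf u := by
      have h1 : Sf x = Sf u ⊔ ((Δ : WithBot ℝ) + T) := by
        rw [hSf]
        calc (Finset.univ.sup fun j => c j + ((x j : ℝ) : WithBot ℝ))
            = Finset.univ.sup fun j => (c j + ((u j : ℝ) : WithBot ℝ)) ⊔ (c j + T) := by
              refine Finset.sup_congr rfl fun j _ => ?_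
              rw [huT j, wb_add_sup]
        _ = (Finset.univ.sup fun j => c j + ((u j : ℝ) : WithBot ℝ)) ⊔
              (Finset.univ.sup fun j => c j + T) := Finset.sup_sup
        _ = Sf u ⊔ ((Δ : WithBot ℝ) + T) := by
              rw [← ht, ← wb_sup_add hn c, ← hΔ', ht]
      have h2 : (Δ : WithBot ℝ) + T = Sf u := by
        rw [hT, ← add_assoc, ← WithBot.coe_add, add_neg_cancel, WithBot.coe_zero, zero_add]
      rw [h1, h2, sup_idem]
    intro i
    rw [hSx, ← hT, huT i]
    exact le_sup_right
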